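/- Let 𝒯 be a family of complete theories and φ an L-sentence such that both 𝒯_φ and 𝒯_{¬φ} are infinite. Then 𝒯 has at least two accumulation points; more precisely, there exist distinct complete theories T₁ ≠ T₂, both accumulation points of 𝒯, with φ ∈ T₁ and ¬φ ∈ T₂ (hence the e-spectrum satisfies e-Sp(𝒯) ≥ 2). -/

import Mathlib

open FirstOrder Language Set

universe u v

namespace Approx

variable {L : FirstOrder.Language.{u, v}}

/-- A complete theory: a satisfiable set of sentences deciding every sentence. -/
def CompleteTheory (T : L.Theory) : Prop :=
  T.IsSatisfiable ∧ ∀ φ : L.Sentence, φ ∈ T ∨ φ.not ∈ T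

/-- `T` is `𝒯`-approximated: `T ∉ 𝒯` and every sentence of `T` lies in some member of `𝒯`. -/
def Approximated (𝒯 : Set L.Theory) (T : L.Theory) : Prop :=
  T ∉ 𝒯 ∧ ∀ φ ∈ T, ∃ T' ∈ 𝒯, φ ∈ T'

/-- The `φ`-neighbourhood `𝒯_φ` of a family of theories. -/
def Nbhd (𝒯 : Set L.Theory) (φ : L.Sentence) : Set L.Theory :=
  {T' ∈ 𝒯 | φ ∈ T'}

/-- An accumulation point of `𝒯`: a complete theory each of whose sentences has an
infinite neighbourhood in `𝒯`. -/
def AccPoint (𝒯 : Set L.Theory) (T : L.Theory) : Prop :=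
  CompleteTheory T ∧ ∀ φ ∈ T, (Nbhd 𝒯 φ).Infinite

/-- The `E`-closure of `𝒯`: `𝒯` together with all its accumulation points. -/
def ClE (𝒯 : Set L.Theory) : Set L.Theory :=
  𝒯 ∪ {T | AccPoint 𝒯 T}


open Filter in
lemma exists_accPoint (𝒯 : Set L.Theory)
    (h𝒯 : ∀ S ∈ 𝒯, CompleteTheory S) (χ : L.Sentence)
    (h : (Nbhd 𝒯 χ).Infinite) :
    ∃ T : L.Theory, AccPoint 𝒯 T ∧ χ ∈ T := by
  haveI : Infinite (Nbhd 𝒯 χ) := h.to_subtype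
  set U : Ultrafilter (Nbhd 𝒯 χ) := hyperfilter (Nbhd 𝒯 χ) with hU
  refine ⟨{ψ | {s : Nbhd 𝒯 χ | ψ ∈ (s : L.Theory)} ∈ U}, ⟨⟨?_, ?_⟩, ?_⟩, ?_⟩
  · rw [Theory.isSatisfiable_iff_isFinitelySatisfiable]
    intro T0 hT0
    have hmem : (⋂ ψ ∈ T0, {s : Nbhd 𝒯 χ | ψ ∈ (s : L.Theory)}) ∈ (U : Filter (Nbhd 𝒯 χ)) := by
      rw [Filter.biInter_finset_mem]
      intro ψ hψ
      exact hT0 hψ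
    obtain ⟨s, hs⟩ := Ultrafilter.nonempty_of_mem hmem
    simp only [Set.mem_iInter] at hs
    have hsat : (s : L.Theory).IsSatisfiable := (h𝒯 s s.2.1).1
    exact hsat.mono (fun ψ hψ => hs ψ hψ)
  · intro ψ
    by_cases hA : {s : Nbhd 𝒯 χ | ψ ∈ (s : L.Theory)} ∈ U
    · exact Or.inl hA
    · right
      have hc : {s : Nbhd 𝒯 χ | ψ ∈ (s : L.Theory)}ᶜ ∈ U :=
        (Ultrafilter.compl_mem_iff_notMem).2 hA
      refine Filter.mem_of_superset hc ?_
      intro s hs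
      rcases (h𝒯 s s.2.1).2 ψ with h1 | h2
      · exact absurd h1 hs
      · exact h2
  · intro ψ hψ
    have hinf : {s : Nbhd 𝒯 χ | ψ ∈ (s : L.Theory)}.Infinite := by
      by_contra hfin
      rw [Set.not_infinite] at hfin
      exact (Filter.notMem_hyperfilter_of_finite hfin) hψ
    have : (Subtype.val '' {s : Nbhd 𝒯 χ | ψ ∈ (s : L.Theory)}).Infinite :=
      hinf.image (Set.injOn_of_injective Subtype.val_injective)
    refine this.mono ?_
    rintro _ ⟨s, hs, rfl⟩
    exact ⟨s.2.1, hs⟩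
  · have : {s : Nbhd 𝒯 χ | χ ∈ (s : L.Theory)} = Set.univ := by
      ext s; simp [s.2.2]
    show {s : Nbhd 𝒯 χ | χ ∈ (s : L.Theory)} ∈ U
    rw [this]
    exact Filter.univ_mem

/-- if both `𝒯_φ` and `𝒯_{¬φ}` are infinite then `𝒯` has at least two
accumulation points, one containing `φ` and one containing `¬φ`. -/
theorem two_accumulation_points
    {L : FirstOrder.Language.{u, v}} [L.IsRelational]
    (𝒯 : Set L.Theory) (h𝒯 : ∀ S ∈ 𝒯, CompleteTheory S) (φ : L.Sentence)
    (h₁ : (Nbhd 𝒯 φ).Infinite) (h₂ : (Nbhd 𝒯 φ.not).Infinite) :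
    ∃ T₁ T₂ : L.Theory, T₁ ≠ T₂ ∧ AccPoint 𝒯 T₁ ∧ AccPoint 𝒯 T₂ ∧
      φ ∈ T₁ ∧ φ.not ∈ T₂ := by
  obtain ⟨T₁, hT₁, hφ₁⟩ := exists_accPoint 𝒯 h𝒯 φ h₁
  obtain ⟨T₂, hT₂, hφ₂⟩ := exists_accPoint 𝒯 h𝒯 φ.not h₂
  refine ⟨T₁, T₂, ?_, hT₁, hT₂, hφ₁, hφ₂⟩
  intro heq
  obtain ⟨M⟩ := hT₁.1.1
  have hr1 : M ⊨ φ := T₁.realize_sentence_of_mem (M := M) hφ₁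
  have hr2 : M ⊨ φ.not := T₁.realize_sentence_of_mem (M := M) (heq ▸ hφ₂)
  rw [Sentence.realize_not] at hr2
  exact hr2 hr1

end Approx
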